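/- arXiv:2309.14317 — 2 statements merged into one kernel-verified Lean document; each statement's English description precedes it below -/
import Mathlib

section
/- Let ρ > 0, x ∈ [0,1], c ≥ 0, θ > 0, and b̄ > 0. The unique maximizer of g(b) = ρ·(x + b)/(1 + b + c) − θ·b over b ∈ [0, b̄] is b* = min{ max{ √(ρ(1 − x + c)/θ) − 1 − c, 0 }, b̄ }, provided 1 − x + c > 0. -/
set_option maxHeartbeats 1000000


theorem stmt_3 (ρ x c θ bbar : ℝ) (hρ : 0 < ρ) (hx : x ∈ Set.Icc (0:ℝ) 1)
    (hc : 0 ≤ c) (hθ : 0 < θ) (hbbar : 0 < bbar) (hpos : 0 < 1 - x + c)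
    (g : ℝ → ℝ) (hg : g = fun b => ρ * (x + b) / (1 + b + c) - θ * b)
    (bstar : ℝ)
    (hbstar : bstar = min (max (Real.sqrt (ρ * (1 - x + c) / θ) - 1 - c) 0) bbar) :
    bstar ∈ Set.Icc 0 bbar ∧
    (∀ b ∈ Set.Icc (0:ℝ) bbar, g b ≤ g bstar) ∧
    (∀ b ∈ Set.Icc (0:ℝ) bbar, g b = g bstar → b = bstar) := by
  have hx0 : 0 ≤ x := hx.1
  set A : ℝ := ρ * (1 - x + c) with hA_def
  have hA : 0 < A := mul_pos hρ hpos
  set k : ℝ := Real.sqrt (A / θ) with hk_def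
  have hk0 : 0 ≤ k := Real.sqrt_nonneg _
  have hk2 : θ * k ^ 2 = A := by
    rw [hk_def, Real.sq_sqrt (by positivity)]
    field_simp
  have hbs : bstar = min (max (k - 1 - c) 0) bbar := hbstar
  have hbs0 : 0 ≤ bstar := by
    rw [hbs]; exact le_min (le_max_right _ _) hbbar.le
  have hbsb : bstar ≤ bbar := by rw [hbs]; exact min_le_right _ _
  have hss : 0 < 1 + bstar + c := by linarith
  have key : ∀ b ∈ Set.Icc (0:ℝ) bbar, b ≠ bstar → g b < g bstar := by
    intro b hb hne
    have hb0 := hb.1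
    have hbb := hb.2
    have hs : 0 < 1 + b + c := by linarith
    have hid : g b - g bstar =
        ((1 + b + c) - (1 + bstar + c)) * (A - θ * (1 + b + c) * (1 + bstar + c))
          / ((1 + b + c) * (1 + bstar + c)) := by
      simp only [hg]
      field_simp
      ring
    have hfrac : g b - g bstar < 0 := by
      rw [hid]
      rcases lt_or_gt_of_ne hne with h | h
      · -- b < bstar : bstar > 0, so 1 + bstar + c ≤ k
        have hbspos : 0 < bstar := lt_of_le_of_lt hb0 h
        have hM : 0 < max (k - 1 - c) 0 := lt_of_lt_of_le hbspos (hbs ▸ min_le_left _ _)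
        have hk1 : 0 < k - 1 - c := by
          rcases lt_max_iff.mp hM with h' | h'
          · exact h'
          · linarith
        have hle : bstar ≤ k - 1 - c := by
          calc bstar ≤ max (k - 1 - c) 0 := hbs ▸ min_le_left _ _
            _ = k - 1 - c := max_eq_left hk1.le
        have h1 : (1 + bstar + c) ≤ k := by linarith
        have hk2' : θ * (k * k) = A := by linear_combination hk2
        have h2 : θ * ((1 + b + c) * (1 + bstar + c)) < θ * (k * k) := by
          apply mul_lt_mul_of_pos_left _ hθ
          calc (1 + b + c) * (1 + bstar + c) < (1 + bstar + c) * (1 + bstar + c) := by nlinarith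
            _ ≤ k * k := by nlinarith
        apply div_neg_of_neg_of_pos
        · apply mul_neg_of_neg_of_pos
          · linarith
          · nlinarith [h2, hk2']
        · positivity
      · -- b > bstar : bstar < bbar, so 1 + bstar + c ≥ k
        have hlt : bstar < bbar := lt_of_lt_of_le h hbb
        have hMeq : bstar = max (k - 1 - c) 0 := by
          rcases min_cases (max (k - 1 - c) 0) bbar with ⟨h1, h2⟩ | ⟨h1, h2⟩
          · rw [hbs, h1]
          · exfalso; rw [hbs, h1] at hlt; exact lt_irrefl _ hlt
        have hge : k - 1 - c ≤ bstar := hMeq ▸ le_max_left _ _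
        have h1 : k ≤ (1 + bstar + c) := by linarith
        have hk2' : θ * (k * k) = A := by linear_combination hk2
        have h2 : θ * (k * k) < θ * ((1 + b + c) * (1 + bstar + c)) := by
          apply mul_lt_mul_of_pos_left _ hθ
          calc k * k ≤ (1 + bstar + c) * (1 + bstar + c) := by nlinarith
            _ < (1 + b + c) * (1 + bstar + c) := by nlinarith
        apply div_neg_of_neg_of_pos
        · apply mul_neg_of_pos_of_neg
          · linarith
          · nlinarith [h2, hk2']
        · positivity
    linarith
  refine ⟨⟨hbs0, hbsb⟩, ?_, ?_⟩
  · intro b hb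
    by_cases h : b = bstar
    · rw [h]
    · exact (key b hb h).le
  · intro b hb heq
    by_contra h
    exact absurd heq (key b hb h).ne
end

section
/- Fix m ≥ 2, ρ > 0, opinions x_j ∈ [0,1] with Σ_j x_j = 1, and positive duals θ₁,…,θ_m with Σ_j θ_j > 0. If the numbers b_j := ((m−1)ρ/Σ_ℓ θ_ℓ)·(1 − (m−1)θ_j/Σ_ℓ θ_ℓ) − x_j are all nonnegative, then they satisfy the interior stationarity system b_j = −(θ_j/ρ)·G² + G − x_j for all j, where G = 1 + Σ_j b_j, and moreover G = (m−1)ρ/Σ_ℓ θ_ℓ. -/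
theorem stmt_12 (m : ℕ) (hm : 2 ≤ m) (ρ : ℝ) (hρ : 0 < ρ)
    (x θ : Fin m → ℝ)
    (hx : ∀ j, x j ∈ Set.Icc (0:ℝ) 1) (hxsum : ∑ j, x j = 1)
    (hθ : ∀ j, 0 < θ j) (hθsum : 0 < ∑ ℓ, θ ℓ)
    (b : Fin m → ℝ)
    (hb : b = fun j =>
      ((m - 1 : ℝ) * ρ / ∑ ℓ, θ ℓ) * (1 - (m - 1 : ℝ) * θ j / ∑ ℓ, θ ℓ) - x j)
    (hbnonneg : ∀ j, 0 ≤ b j)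
    (G : ℝ) (hG : G = 1 + ∑ j, b j) :
    (∀ j, b j = -(θ j / ρ) * G ^ 2 + G - x j) ∧
    G = (m - 1 : ℝ) * ρ / ∑ ℓ, θ ℓ := by
  set S := ∑ ℓ, θ ℓ with hS
  have hS0 : S ≠ 0 := ne_of_gt hθsum
  have hρ0 : ρ ≠ 0 := ne_of_gt hρ
  have hsum : ∑ j, b j = (m - 1 : ℝ) * ρ / S - 1 := by
    subst hb
    simp only [Finset.sum_sub_distrib, hxsum]
    rw [← Finset.mul_sum]
    have : ∑ j, (1 - (m - 1 : ℝ) * θ j / S) = (m : ℝ) - (m - 1 : ℝ) := by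
      simp only [Finset.sum_sub_distrib, Finset.sum_const, Finset.card_univ,
        Fintype.card_fin, nsmul_eq_mul, mul_one]
      congr 1
      have : ∀ j : Fin m, (m - 1 : ℝ) * θ j / S = (m - 1 : ℝ) / S * θ j := fun j => by ring
      simp only [this]
      rw [← Finset.mul_sum, ← hS]
      field_simp
    rw [this]
    ring_nf
  have hGval : G = (m - 1 : ℝ) * ρ / S := by
    rw [hG, hsum]; ring
  refine ⟨fun j => ?_, hGval⟩
  rw [hb, hGval]
  field_simp
  ring
end
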